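/- arXiv:1310.1950 — 3 statements merged into one kernel-verified Lean document; each statement's English description precedes it below -/
import Mathlib

section
/- Let K be a zero-dimensional compact line with minimum 0. The linear span of the characteristic functions χ_{[0,s]}, where s ranges over the right-isolated points of K, is dense in C(K) with the sup norm. -/
open Set TopologicalSpace

/-- A point of a linear order is right-isolated if it is the maximum or has a successor. -/
def RightIsolated {K : Type*} [LinearOrder K] (b : K) : Prop :=
  IsMax b ∨ ∃ u, b ⋖ u

lemma rightIsolated_isClopen_Iic {K : Type*} [LinearOrder K] [TopologicalSpace K]
    [OrderTopology K] {s : K} (hs : RightIsolated s) : IsClopen (Set.Iic s) := by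
  refine ⟨isClosed_Iic, ?_⟩
  rcases hs with h | ⟨u, hu⟩
  · have : Set.Iic s = Set.univ := by
      ext x; simp [h.isTop x]
    rw [this]; exact isOpen_univ
  · have : Set.Iic s = Set.Iio u := by
      ext x
      simp only [Set.mem_Iic, Set.mem_Iio]
      constructor
      · exact fun hx => lt_of_le_of_lt hx hu.lt
      · intro hx
        by_contra h
        exact hu.2 (lt_of_not_ge h) hx
    rw [this]; exact isOpen_Iio

/-- The continuous indicator of `Iic s` for a right-isolated `s`. -/
noncomputable def indIic {K : Type*} [LinearOrder K] [TopologicalSpace K]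
    [OrderTopology K] {s : K} (hs : RightIsolated s) : C(K, ℝ) where
  toFun := fun x => if x ≤ s then 1 else 0
  continuous_toFun := by
    have h := rightIsolated_isClopen_Iic hs
    have hloc : IsLocallyConstant (fun x : K => if x ≤ s then (1:ℝ) else 0) := by
      rw [IsLocallyConstant.iff_isOpen_fiber]
      intro r
      have : (fun x : K => if x ≤ s then (1:ℝ) else 0) ⁻¹' {r} =
          (if (1:ℝ) ∈ ({r} : Set ℝ) then Set.Iic s else ∅) ∪
          (if (0:ℝ) ∈ ({r} : Set ℝ) then (Set.Iic s)ᶜ else ∅) := by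
        ext x
        by_cases hx : x ≤ s
        · simp [hx, eq_comm]
        · simp [hx, eq_comm, lt_of_not_ge hx]
      rw [this]
      apply IsOpen.union <;> split <;>
        first
        | exact h.2
        | exact h.1.isOpen_compl
        | exact isOpen_empty
    exact hloc.continuous

theorem stmt8 {K : Type*} [LinearOrder K] [TopologicalSpace K] [OrderTopology K]
    [CompactSpace K] [Nonempty K]
    (hzd : IsTopologicalBasis {U : Set K | IsClopen U}) :
    closure (Submodule.span ℝ
      {f : C(K, ℝ) | ∃ s : K, RightIsolated s ∧
        ∀ x : K, f x = if x ≤ s then 1 else 0} : Set C(K, ℝ)) = Set.univ := by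
  set S : Set C(K, ℝ) := {f : C(K, ℝ) | ∃ s : K, RightIsolated s ∧
      ∀ x : K, f x = if x ≤ s then 1 else 0} with hSdef
  -- K has a greatest element
  obtain ⟨m, -, hm⟩ := isCompact_univ.exists_isGreatest (univ_nonempty (α := K))
  have hmmax : IsMax m := fun x _ => hm (mem_univ x)
  -- 1 ∈ S
  have hone : (1 : C(K, ℝ)) ∈ S := by
    refine ⟨m, Or.inl hmmax, fun x => ?_⟩
    simp [hm (mem_univ x)]
  -- S closed under multiplication
  have hmul : ∀ f ∈ S, ∀ g ∈ S, f * g ∈ S := by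
    rintro f ⟨s, hs, hf⟩ g ⟨t, ht, hg⟩
    refine ⟨min s t, ?_, fun x => ?_⟩
    · rcases le_total s t with h | h
      · simpa [min_eq_left h] using hs
      · simpa [min_eq_right h] using ht
    · have : (f * g) x = f x * g x := rfl
      rw [this, hf, hg]
      by_cases h1 : x ≤ s <;> by_cases h2 : x ≤ t <;>
        simp [h1, h2, le_min_iff]
  -- key separation fact
  have hsep : ∀ x y : K, x < y → ∃ s : K, RightIsolated s ∧ x ≤ s ∧ s < y := by
    intro x y hxy
    obtain ⟨U, hU, hxU, hUsub⟩ := hzd.exists_subset_of_mem_open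
      (show x ∈ Set.Iio y from hxy) isOpen_Iio
    have hUc : IsCompact U := hU.isClosed.isCompact
    obtain ⟨s, hsU, hsg⟩ := hUc.exists_isGreatest ⟨x, hxU⟩
    refine ⟨s, ?_, hsg hxU, hUsub hsU⟩
    by_cases hmax : IsMax s
    · exact Or.inl hmax
    · right
      obtain ⟨u0, hu0⟩ := not_isMax_iff.mp hmax
      obtain ⟨u, hu, hIco⟩ := exists_Ico_subset_of_mem_nhds
        (hU.isOpen.mem_nhds hsU) ⟨u0, hu0⟩
      refine ⟨u, hu, fun t hst htu => ?_⟩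
      exact absurd (hsg (hIco ⟨le_of_lt hst, htu⟩)) (not_le_of_gt hst)
  -- the span equals the submodule of the adjoined subalgebra
  have hspan : (Subalgebra.toSubmodule (Algebra.adjoin ℝ S)) = Submodule.span ℝ S := by
    apply Algebra.adjoin_eq_span_of_subset
    intro f hf
    induction hf using Submonoid.closure_induction with
    | mem g hg => exact Submodule.subset_span hg
    | one =>
      exact Submodule.subset_span hone
    | mul g h hg hh hg' hh' =>
      -- need g * h ∈ span. Use that span of a mult-closed set is mult-closed.
      have key : ∀ a ∈ Submodule.span ℝ S, ∀ b ∈ Submodule.span ℝ S,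
          a * b ∈ Submodule.span ℝ S := by
        intro a ha
        induction ha using Submodule.span_induction with
        | mem a haS =>
          intro b hb
          induction hb using Submodule.span_induction with
          | mem b hbS => exact Submodule.subset_span (hmul _ haS _ hbS)
          | zero => simpa using Submodule.zero_mem _
          | add b c _ _ hb hc => rw [mul_add]; exact Submodule.add_mem _ hb hc
          | smul r b _ hb => rw [mul_smul_comm]; exact Submodule.smul_mem _ r hb
        | zero => intro b hb; simpa using Submodule.zero_mem _
        | add a c _ _ ha hc => intro b hb; rw [add_mul]; exact Submodule.add_mem _ (ha b hb) (hc b hb)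
        | smul r a _ ha => intro b hb; rw [smul_mul_assoc]; exact Submodule.smul_mem _ r (ha b hb)
      exact key g hg' h hh'
  -- the adjoined subalgebra separates points
  have hASep : (Algebra.adjoin ℝ S).SeparatesPoints := by
    intro x y hxy
    rcases hxy.lt_or_gt with h | h
    · obtain ⟨s, hs, hxs, hsy⟩ := hsep x y h
      refine ⟨indIic hs, ⟨indIic hs, Algebra.subset_adjoin ⟨s, hs, fun _ => rfl⟩, rfl⟩, ?_⟩
      simp only [indIic, ContinuousMap.coe_mk]
      rw [if_pos hxs, if_neg (not_le_of_gt hsy)]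
      norm_num
    · obtain ⟨s, hs, hys, hsx⟩ := hsep y x h
      refine ⟨indIic hs, ⟨indIic hs, Algebra.subset_adjoin ⟨s, hs, fun _ => rfl⟩, rfl⟩, ?_⟩
      simp only [indIic, ContinuousMap.coe_mk]
      rw [if_pos hys, if_neg (not_le_of_gt hsx)]
      norm_num
  have := ContinuousMap.subalgebra_topologicalClosure_eq_top_of_separatesPoints
    (Algebra.adjoin ℝ S) hASep
  have hcl : closure ((Algebra.adjoin ℝ S : Subalgebra ℝ C(K, ℝ)) : Set C(K, ℝ)) = Set.univ := by
    have : ((Algebra.adjoin ℝ S).topologicalClosure : Set C(K, ℝ)) = Set.univ := by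
      rw [this]; rfl
    simpa [Subalgebra.topologicalClosure] using this
  calc closure (Submodule.span ℝ S : Set C(K, ℝ))
      = closure ((Algebra.adjoin ℝ S : Subalgebra ℝ C(K, ℝ)) : Set C(K, ℝ)) := by
        rw [← hspan, Subalgebra.coe_toSubmodule]
    _ = Set.univ := hcl
end

section
/- In a compact line K, every clopen subset is a finite disjoint union of clopen intervals, each of the form [0,b] or ]b',b] with b, b' right-isolated points of K (0 denoting the minimum of K). -/
open Set

section Aux

variable {K : Type*} [LinearOrder K]

/-- A "good" set: one of the two allowed interval forms. -/
def Good (J : Set K) : Prop :=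
  (∃ b : K, RightIsolated b ∧ J = Set.Iic b) ∨
    (∃ b' b : K, RightIsolated b' ∧ RightIsolated b ∧ b' < b ∧ J = Set.Ioc b' b)

lemma RightIsolated.min_ri {a b : K} (ha : RightIsolated a) (hb : RightIsolated b) :
    RightIsolated (min a b) := by
  rcases le_total a b with h | h
  · rwa [min_eq_left h]
  · rwa [min_eq_right h]

lemma RightIsolated.max_ri {a b : K} (ha : RightIsolated a) (hb : RightIsolated b) :
    RightIsolated (max a b) := by
  rcases le_total a b with h | h
  · rwa [max_eq_right h]
  · rwa [max_eq_left h]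

lemma RightIsolated.isOpen_Iic [TopologicalSpace K] [OrderTopology K] {b : K}
    (h : RightIsolated b) : IsOpen (Set.Iic b) := by
  rcases h with h | ⟨u, hu⟩
  · have : Set.Iic b = univ := eq_univ_of_forall fun y => (le_total y b).elim id fun h' => h h'
    rw [this]; exact isOpen_univ
  · have : Set.Iic b = Iio u := by
      ext y
      constructor
      · exact fun h' => h'.trans_lt hu.lt
      · exact fun h' => le_of_not_gt fun hby => hu.2 hby h'
    rw [this]; exact isOpen_Iio

lemma Good.isOpen [TopologicalSpace K] [OrderTopology K] {J : Set K} (h : Good J) :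
    IsOpen J := by
  rcases h with ⟨b, hb, rfl⟩ | ⟨b', b, hb', hb, hlt, rfl⟩
  · exact hb.isOpen_Iic
  · rw [← Set.Ioi_inter_Iic]
    exact isOpen_Ioi.inter hb.isOpen_Iic

lemma good_union_iic_iic {b d : K} (hb : RightIsolated b) (hd : RightIsolated d) :
    Good (Set.Iic b ∪ Set.Iic d) := by
  left
  refine ⟨max b d, hb.max_ri hd, ?_⟩
  ext w
  simp [le_max_iff]

lemma good_union_iic_ioc {b c' d : K} (hb : RightIsolated b) (hc' : RightIsolated c')
    (hd : RightIsolated d) (hcd : c' < d)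
    (z : K) (hzb : z ≤ b) (hcz : c' < z) (hzd : z ≤ d) :
    Good (Set.Iic b ∪ Set.Ioc c' d) := by
  left
  refine ⟨max b d, hb.max_ri hd, ?_⟩
  ext w
  simp only [Set.mem_union, Set.mem_Iic, Set.mem_Ioc, le_max_iff]
  constructor
  · rintro (h | ⟨h1, h2⟩)
    · exact Or.inl h
    · exact Or.inr h2
  · rintro (h | h)
    · exact Or.inl h
    · rcases le_or_gt w b with h' | h'
      · exact Or.inl h'
      · exact Or.inr ⟨(hcz.trans_le hzb).trans h', h⟩

lemma good_union_ioc_ioc {a' b c' d : K} (ha' : RightIsolated a') (hb : RightIsolated b)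
    (hc' : RightIsolated c') (hd : RightIsolated d) (hab : a' < b) (hcd : c' < d)
    (z : K) (haz : a' < z) (hzb : z ≤ b) (hcz : c' < z) (hzd : z ≤ d) :
    Good (Set.Ioc a' b ∪ Set.Ioc c' d) := by
  right
  refine ⟨min a' c', max b d, ha'.min_ri hc', hb.max_ri hd,
    (min_le_left a' c').trans_lt (haz.trans_le (hzb.trans (le_max_left b d))), ?_⟩
  ext w
  simp only [Set.mem_union, Set.mem_Ioc, lt_min_iff, min_lt_iff, le_max_iff]
  constructor
  · rintro (⟨h1, h2⟩ | ⟨h1, h2⟩)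
    · exact ⟨Or.inl h1, Or.inl h2⟩
    · exact ⟨Or.inr h1, Or.inr h2⟩
  · rintro ⟨h1, h2⟩
    rcases le_or_gt w b with hwb | hwb
    · rcases lt_or_ge a' w with haw | haw
      · exact Or.inl ⟨haw, hwb⟩
      · -- w ≤ a', so w ∈ Ioc c' d
        have hwd : w ≤ d := haw.trans (haz.le.trans hzd)
        have hcw : c' < w := by
          rcases h1 with h | h
          · exact absurd h (not_lt.2 haw)
          · exact h
        exact Or.inr ⟨hcw, hwd⟩
    · -- b < w, so w ≤ d
      have hwd : w ≤ d := by
        rcases h2 with h | h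
        · exact absurd h (not_le.2 hwb)
        · exact h
      exact Or.inr ⟨(hcz.trans_le hzb).trans hwb, hwd⟩

lemma Good.union {J₁ J₂ : Set K} (h₁ : Good J₁) (h₂ : Good J₂)
    (h : ¬ Disjoint J₁ J₂) : Good (J₁ ∪ J₂) := by
  obtain ⟨z, hz1, hz2⟩ := Set.not_disjoint_iff.1 h
  rcases h₁ with ⟨b, hb, rfl⟩ | ⟨a', b, ha', hb, hab, rfl⟩ <;>
    rcases h₂ with ⟨d, hd, rfl⟩ | ⟨c', d, hc', hd, hcd, rfl⟩
  · exact good_union_iic_iic hb hd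
  · exact good_union_iic_ioc hb hc' hd hcd z hz1 hz2.1 hz2.2
  · rw [Set.union_comm]
    exact good_union_iic_ioc hd ha' hb hab z hz2 hz1.1 hz1.2
  · exact good_union_ioc_ioc ha' hb hc' hd hab hcd z hz1.1 hz1.2 hz2.1 hz2.2

lemma merge_aux : ∀ (n : ℕ) (F : Finset (Set K)), F.card ≤ n → (∀ J ∈ F, Good J) →
    ∃ (m : ℕ) (I : Fin m → Set K), (∀ i j, i ≠ j → Disjoint (I i) (I j)) ∧
      (⋃ i, I i) = ⋃₀ ↑F ∧ ∀ i, Good (I i) := by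
  intro n
  induction n with
  | zero =>
    intro F hF _
    have : F = ∅ := Finset.card_eq_zero.1 (Nat.le_zero.1 hF)
    subst this
    exact ⟨0, Fin.elim0, fun i => i.elim0, by simp, fun i => i.elim0⟩
  | succ n ih =>
    intro F hcard hG
    classical
    by_cases hdis : ∀ J₁ ∈ F, ∀ J₂ ∈ F, J₁ ≠ J₂ → Disjoint J₁ J₂
    · refine ⟨F.card, fun i => ((F.equivFin.symm i : F) : Set K), ?_, ?_, ?_⟩
      · intro i j hij
        refine hdis _ (F.equivFin.symm i).2 _ (F.equivFin.symm j).2 ?_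
        intro h
        exact hij (F.equivFin.symm.injective (Subtype.coe_injective h))
      · ext z
        simp only [Set.mem_iUnion, Set.mem_sUnion, Finset.mem_coe]
        constructor
        · rintro ⟨i, hi⟩
          exact ⟨_, (F.equivFin.symm i).2, hi⟩
        · rintro ⟨J, hJ, hz⟩
          refine ⟨F.equivFin ⟨J, hJ⟩, ?_⟩
          rw [Equiv.symm_apply_apply]
          exact hz
      · intro i
        exact hG _ (F.equivFin.symm i).2
    · push_neg at hdis
      obtain ⟨J₁, h₁, J₂, h₂, hne, hnd⟩ := hdis
      set F' : Finset (Set K) := insert (J₁ ∪ J₂) ((F.erase J₁).erase J₂) with hF'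
      have h₂' : J₂ ∈ F.erase J₁ := Finset.mem_erase.2 ⟨hne.symm, h₂⟩
      have hcard' : F'.card ≤ n := by
        have e1 : ((F.erase J₁).erase J₂).card = F.card - 2 := by
          rw [Finset.card_erase_of_mem h₂', Finset.card_erase_of_mem h₁]
          omega
        have h2le : 2 ≤ F.card := Finset.one_lt_card.2 ⟨J₁, h₁, J₂, h₂, hne⟩
        calc F'.card ≤ ((F.erase J₁).erase J₂).card + 1 := Finset.card_insert_le _ _
          _ ≤ n := by omega
      have hG' : ∀ J ∈ F', Good J := by
        intro J hJ
        rcases Finset.mem_insert.1 hJ with rfl | hJ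
        · exact (hG _ h₁).union (hG _ h₂) hnd
        · exact hG _ (Finset.mem_of_mem_erase (Finset.mem_of_mem_erase hJ))
      obtain ⟨m, I, hd, hu, hg⟩ := ih F' hcard' hG'
      refine ⟨m, I, hd, ?_, hg⟩
      rw [hu]
      ext z
      simp only [hF', Finset.coe_insert, Set.sUnion_insert, Set.mem_union, Set.mem_sUnion,
        Finset.mem_coe, Finset.mem_erase]
      constructor
      · rintro ((hz | hz) | ⟨J, ⟨-, -, hJ⟩, hz⟩)
        · exact ⟨J₁, h₁, hz⟩
        · exact ⟨J₂, h₂, hz⟩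
        · exact ⟨J, hJ, hz⟩
      · rintro ⟨J, hJ, hz⟩
        by_cases e1 : J = J₁
        · subst e1; exact Or.inl (Or.inl hz)
        by_cases e2 : J = J₂
        · subst e2; exact Or.inl (Or.inr hz)
        · exact Or.inr ⟨J, ⟨e2, e1, hJ⟩, hz⟩

lemma exists_good [TopologicalSpace K] [OrderTopology K] [CompactSpace K] [Nonempty K]
    {C : Set K} (hC : IsClopen C) {x : K} (hx : x ∈ C) :
    ∃ J, x ∈ J ∧ J ⊆ C ∧ Good J := by
  classical
  -- right endpoint
  set S : Set K := {y | x ≤ y ∧ Set.Icc x y ⊆ C} with hSdef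
  have hSC : S ⊆ C := fun y hy => hy.2 ⟨hy.1, le_rfl⟩
  have hxS : x ∈ S := ⟨le_rfl, by rw [Set.Icc_self]; exact Set.singleton_subset_iff.2 hx⟩
  obtain ⟨b, hbmem, hbub⟩ : ∃ b, IsGreatest (closure S) b :=
    (isClosed_closure.isCompact).exists_isGreatest ⟨x, subset_closure hxS⟩
  have hbC : b ∈ C := by
    have := closure_mono hSC hbmem
    rwa [hC.isClosed.closure_eq] at this
  have hxb : x ≤ b := hbub (subset_closure hxS)
  have keyS : ∀ t, t < b → ∃ s ∈ S, t < s := by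
    intro t ht
    obtain ⟨s, hs1, hs2⟩ := mem_closure_iff.1 hbmem (Set.Ioi t) isOpen_Ioi ht
    exact ⟨s, hs2, hs1⟩
  have hIccb : Set.Icc x b ⊆ C := by
    rintro t ⟨htx, htb⟩
    rcases eq_or_lt_of_le htb with rfl | htb
    · exact hbC
    · obtain ⟨s, hs, hts⟩ := keyS t htb
      exact hs.2 ⟨htx, hts.le⟩
  have hrb : RightIsolated b := by
    by_contra h
    rw [RightIsolated, not_or, not_isMax_iff] at h
    obtain ⟨hmax, hsucc⟩ := h
    push_neg at hsucc
    have hnhds : C ∈ nhds b := hC.isOpen.mem_nhds hbC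
    obtain ⟨c, hbc, hsub⟩ := exists_Ico_subset_of_mem_nhds hnhds hmax
    obtain ⟨v, hbv, hvc⟩ := (not_covBy_iff hbc).1 (hsucc c)
    have hvS : v ∈ S := by
      refine ⟨hxb.trans hbv.le, ?_⟩
      rintro t ⟨htx, htv⟩
      rcases le_or_gt t b with h' | h'
      · exact hIccb ⟨htx, h'⟩
      · exact hsub ⟨h'.le, htv.trans_lt hvc⟩
    exact absurd (hbub (subset_closure hvS)) (not_le.2 hbv)
  -- left endpoint
  set T : Set K := {y | y ≤ x ∧ Set.Icc y x ⊆ C} with hTdef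
  have hTC : T ⊆ C := fun y hy => hy.2 ⟨le_rfl, hy.1⟩
  have hxT : x ∈ T := ⟨le_rfl, by rw [Set.Icc_self]; exact Set.singleton_subset_iff.2 hx⟩
  obtain ⟨a, hamem, halb⟩ : ∃ a, IsLeast (closure T) a :=
    (isClosed_closure.isCompact).exists_isLeast ⟨x, subset_closure hxT⟩
  have haC : a ∈ C := by
    have := closure_mono hTC hamem
    rwa [hC.isClosed.closure_eq] at this
  have hax : a ≤ x := halb (subset_closure hxT)
  have keyT : ∀ t, a < t → ∃ s ∈ T, s < t := by
    intro t ht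
    obtain ⟨s, hs1, hs2⟩ := mem_closure_iff.1 hamem (Set.Iio t) isOpen_Iio ht
    exact ⟨s, hs2, hs1⟩
  have hIcca : Set.Icc a x ⊆ C := by
    rintro t ⟨hat, htx⟩
    rcases eq_or_lt_of_le hat with rfl | hat
    · exact haC
    · obtain ⟨s, hs, hst⟩ := keyT t hat
      exact hs.2 ⟨hst.le, htx⟩
  by_cases hbot : ∀ y, a ≤ y
  · refine ⟨Set.Iic b, hxb, ?_, Or.inl ⟨b, hrb, rfl⟩⟩
    intro w hw
    rcases le_or_gt w x with h' | h'
    · exact hIcca ⟨hbot w, h'⟩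
    · exact hIccb ⟨h'.le, hw⟩
  · push_neg at hbot
    obtain ⟨w, hw⟩ := hbot
    have hpred : ∃ a', a' ⋖ a := by
      by_contra h
      push_neg at h
      have hnhds : C ∈ nhds a := hC.isOpen.mem_nhds haC
      obtain ⟨l, hla, hsub⟩ := exists_Ioc_subset_of_mem_nhds hnhds ⟨w, hw⟩
      obtain ⟨v, hlv, hva⟩ := (not_covBy_iff hla).1 (h l)
      have hvT : v ∈ T := by
        refine ⟨hva.le.trans hax, ?_⟩
        rintro t ⟨htv, htx⟩
        rcases le_or_gt t a with h' | h'
        · exact hsub ⟨hlv.trans_le htv, h'⟩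
        · exact hIcca ⟨h'.le, htx⟩
      exact absurd (halb (subset_closure hvT)) (not_le.2 hva)
    obtain ⟨a', ha'⟩ := hpred
    refine ⟨Set.Ioc a' b, ⟨ha'.lt.trans_le hax, hxb⟩, ?_,
      Or.inr ⟨a', b, Or.inr ⟨a, ha'⟩, hrb, ha'.lt.trans_le (hax.trans hxb), rfl⟩⟩
    rintro v ⟨hv1, hv2⟩
    have hav : a ≤ v := le_of_not_gt fun hva => ha'.2 hv1 hva
    rcases le_or_gt v x with h' | h'
    · exact hIcca ⟨hav, h'⟩
    · exact hIccb ⟨h'.le, hv2⟩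

end Aux

theorem stmt9 {K : Type*} [LinearOrder K] [TopologicalSpace K] [OrderTopology K]
    [CompactSpace K] [Nonempty K]
    (C : Set K) (hC : IsClopen C) :
    ∃ (n : ℕ) (I : Fin n → Set K),
      (∀ i j, i ≠ j → Disjoint (I i) (I j)) ∧
      C = ⋃ i, I i ∧
      ∀ i, (∃ b : K, RightIsolated b ∧ I i = Set.Iic b) ∨
        (∃ b' b : K, RightIsolated b' ∧ RightIsolated b ∧ b' < b ∧
          I i = Set.Ioc b' b) := by
  classical
  have hcomp : IsCompact C := hC.isClosed.isCompact
  have hJ : ∀ x : K, ∃ J : Set K, IsOpen J ∧ (x ∈ C → x ∈ J ∧ J ⊆ C ∧ Good J) := by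
    intro x
    by_cases hx : x ∈ C
    · obtain ⟨J, h1, h2, h3⟩ := exists_good hC hx
      exact ⟨J, h3.isOpen, fun _ => ⟨h1, h2, h3⟩⟩
    · exact ⟨∅, isOpen_empty, fun h => absurd h hx⟩
  choose J hJopen hJspec using hJ
  obtain ⟨t, htC, hcover⟩ :=
    hcomp.elim_nhds_subcover J (fun x hx => (hJopen x).mem_nhds (hJspec x hx).1)
  have hall : ∀ s ∈ t.image J, Good s := by
    intro s hs
    simp only [Finset.mem_image] at hs
    obtain ⟨x, hx, rfl⟩ := hs
    exact (hJspec x (htC x hx)).2.2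
  obtain ⟨n, I, hdisj, hunion, hgood⟩ := merge_aux (t.image J).card (t.image J) le_rfl hall
  refine ⟨n, I, hdisj, ?_, fun i => hgood i⟩
  rw [hunion]
  apply Set.Subset.antisymm
  · intro z hz
    obtain ⟨x, hx⟩ := Set.mem_iUnion.1 (hcover hz)
    simp only [Set.mem_iUnion, exists_prop] at hx
    refine ⟨J x, ?_, hx.2⟩
    simp only [Finset.coe_image, Set.mem_image, Finset.mem_coe]
    exact ⟨x, hx.1, rfl⟩
  · rintro z ⟨s, hs, hz⟩
    simp only [Finset.coe_image, Set.mem_image, Finset.mem_coe] at hs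
    obtain ⟨x, hx, rfl⟩ := hs
    exact (hJspec x (htC x hx)).2.1 hz
end

section
/- Let K be a compact line, L a second-countable (equivalently metrizable) zero-dimensional compact line, and q : K → L a continuous increasing surjection. If a bounded sequence (ν_n) in M(K) satisfies ν_n([0,t]) → 0 for every right-isolated point t of K, and K is zero-dimensional, then (ν_n) is weak*-null in M(K) = C(K)*. -/
open MeasureTheory Set Filter Topology

/-- Integral of a continuous function against a signed measure. -/
noncomputable def sint {K : Type*} [TopologicalSpace K] [MeasurableSpace K]
    (μ : SignedMeasure K) (f : C(K, ℝ)) : ℝ :=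
  ∫ x, f x ∂μ.toJordanDecomposition.posPart - ∫ x, f x ∂μ.toJordanDecomposition.negPart

section Aux

variable {K : Type*} [TopologicalSpace K]

/-- The indicator function of a clopen set as a continuous map. -/
noncomputable def cInd (U : Set K) (hU : IsClopen U) : C(K, ℝ) :=
  ⟨U.indicator 1, continuous_indicator (by simp [hU]) continuous_const.continuousOn⟩

lemma cInd_apply (U : Set K) (hU : IsClopen U) (x : K) :
    cInd U hU x = U.indicator 1 x := rfl

lemma integrable_cm [CompactSpace K] [MeasurableSpace K] [BorelSpace K]
    (μ : Measure K) [IsFiniteMeasure μ] (f : C(K, ℝ)) :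
    Integrable (fun x => f x) μ :=
  f.continuous.integrable_of_hasCompactSupport (isClosed_tsupport _).isCompact

lemma sint_add [CompactSpace K] [MeasurableSpace K] [BorelSpace K]
    (μ : SignedMeasure K) (f g : C(K, ℝ)) :
    sint μ (f + g) = sint μ f + sint μ g := by
  unfold sint
  rw [show (fun x => (f + g) x) = fun x => f x + g x from rfl]
  rw [integral_add (integrable_cm _ f) (integrable_cm _ g),
    integral_add (integrable_cm _ f) (integrable_cm _ g)]
  ring

lemma sint_smul [CompactSpace K] [MeasurableSpace K] [BorelSpace K]
    (μ : SignedMeasure K) (c : ℝ) (f : C(K, ℝ)) :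
    sint μ (c • f) = c * sint μ f := by
  unfold sint
  rw [show (fun x => (c • f) x) = fun x => c • (f x) from rfl]
  rw [integral_smul, integral_smul]
  simp [mul_sub]

lemma sint_zero [MeasurableSpace K] (μ : SignedMeasure K) :
    sint μ (0 : C(K, ℝ)) = 0 := by
  unfold sint
  simp

lemma sint_sub [CompactSpace K] [MeasurableSpace K] [BorelSpace K]
    (μ : SignedMeasure K) (f g : C(K, ℝ)) :
    sint μ (f - g) = sint μ f - sint μ g := by
  have h1 : f = (f - g) + g := by ring
  have h2 := sint_add μ (f - g) g
  rw [← h1] at h2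
  linarith

lemma abs_sint_le [CompactSpace K] [MeasurableSpace K] [BorelSpace K]
    (μ : SignedMeasure K) (f : C(K, ℝ)) :
    |sint μ f| ≤ ‖f‖ * (μ.totalVariation Set.univ).toReal := by
  set P := μ.toJordanDecomposition.posPart
  set N := μ.toJordanDecomposition.negPart
  have hP : ‖∫ x, f x ∂P‖ ≤ ‖f‖ * (P Set.univ).toReal :=
    norm_integral_le_of_norm_le_const (Eventually.of_forall fun x => f.norm_coe_le_norm x)
  have hN : ‖∫ x, f x ∂N‖ ≤ ‖f‖ * (N Set.univ).toReal :=
    norm_integral_le_of_norm_le_const (Eventually.of_forall fun x => f.norm_coe_le_norm x)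
  have htv : (μ.totalVariation Set.univ).toReal = (P Set.univ).toReal + (N Set.univ).toReal := by
    rw [SignedMeasure.totalVariation, Measure.add_apply,
      ENNReal.toReal_add (measure_ne_top _ _) (measure_ne_top _ _)]
  rw [htv, mul_add]
  calc |sint μ f| ≤ ‖∫ x, f x ∂P‖ + ‖∫ x, f x ∂N‖ := by
        rw [sint]; exact abs_sub _ _
    _ ≤ ‖f‖ * (P Set.univ).toReal + ‖f‖ * (N Set.univ).toReal := add_le_add hP hN

lemma sint_cInd [CompactSpace K] [MeasurableSpace K] [BorelSpace K]
    (μ : SignedMeasure K) (U : Set K) (hU : IsClopen U) :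
    sint μ (cInd U hU) = μ U := by
  have hm : MeasurableSet U := hU.isClosed.measurableSet
  have key : ∀ (ρ : Measure K) [IsFiniteMeasure ρ],
      ∫ x, (cInd U hU) x ∂ρ = (ρ U).toReal := by
    intro ρ _
    have : ∫ x, (cInd U hU) x ∂ρ = ∫ x, U.indicator (fun _ => (1 : ℝ)) x ∂ρ := rfl
    rw [this, integral_indicator_const (1 : ℝ) hm, smul_eq_mul, mul_one]; rfl
  rw [sint, key, key]
  conv_rhs => rw [← μ.toSignedMeasure_toJordanDecomposition]
  rw [JordanDecomposition.toSignedMeasure]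
  rw [VectorMeasure.sub_apply, Measure.toSignedMeasure_apply_measurable hm,
    Measure.toSignedMeasure_apply_measurable hm]
  rfl

end Aux

section OrderAux

variable {K : Type*} [LinearOrder K] [TopologicalSpace K] [OrderTopology K] [CompactSpace K]

omit [CompactSpace K] in
lemma isClopen_Iic_of_rightIsolated {t : K} (ht : RightIsolated t) : IsClopen (Iic t) := by
  refine ⟨isClosed_Iic, ?_⟩
  rcases ht with hmax | ⟨u, hu⟩
  · have : Iic t = Set.univ := by
      ext x; simp [hmax.isTop x]
    rw [this]; exact isOpen_univ
  · rw [← hu.Iio_eq]; exact isOpen_Iio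

lemma exists_rightIsolated_between
    (hKzd : TopologicalSpace.IsTopologicalBasis {U : Set K | IsClopen U})
    {x y : K} (hxy : x < y) : ∃ t, RightIsolated t ∧ x ≤ t ∧ t < y := by
  obtain ⟨U, hU, hxU, hUsub⟩ := hKzd.exists_subset_of_mem_open (mem_Iio.2 hxy) isOpen_Iio
  have hU' : IsClopen U := hU
  set V := U ∩ Ici x with hV
  have hVclosed : IsClosed V := hU'.isClosed.inter isClosed_Ici
  obtain ⟨t, htV, htub⟩ := hVclosed.isCompact.exists_isGreatest ⟨x, hxU, le_refl x⟩
  have htx : x ≤ t := htV.2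
  have hty : t < y := hUsub htV.1
  refine ⟨t, ?_, htx, hty⟩
  right
  obtain ⟨m, hmcl, hmlb⟩ := isClosed_closure.isCompact.exists_isLeast
    ⟨y, subset_closure hty⟩
  have hmt : t ≤ m :=
    (closure_minimal Ioi_subset_Ici_self isClosed_Ici) hmcl
  rcases eq_or_lt_of_le hmt with rfl | hlt
  · exfalso
    have hne : (U ∩ Ioi t).Nonempty := mem_closure_iff.1 hmcl U hU'.isOpen htV.1
    obtain ⟨s, hsU, hst⟩ := hne
    have hsV : s ∈ V := ⟨hsU, le_trans htx (le_of_lt hst)⟩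
    exact absurd (htub hsV) (not_le.2 hst)
  · exact ⟨m, hlt, fun c hc1 hc2 =>
      absurd (hmlb (subset_closure hc1)) (not_le.2 hc2)⟩

end OrderAux

theorem stmt10 {K L : Type*}
    [LinearOrder K] [TopologicalSpace K] [OrderTopology K] [CompactSpace K] [Nonempty K]
    [MeasurableSpace K] [BorelSpace K]
    [LinearOrder L] [TopologicalSpace L] [OrderTopology L] [CompactSpace L] [Nonempty L]
    [SecondCountableTopology L]
    (hLzd : TopologicalSpace.IsTopologicalBasis {U : Set L | IsClopen U})
    (q : K → L) (hqc : Continuous q) (hqm : Monotone q) (hqs : Function.Surjective q)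
    (hKzd : TopologicalSpace.IsTopologicalBasis {U : Set K | IsClopen U})
    (ν : ℕ → SignedMeasure K) (hreg : ∀ n, (ν n).totalVariation.Regular)
    (hbdd : ∃ C : ℝ, ∀ n, ((ν n).totalVariation Set.univ).toReal ≤ C)
    (hnull : ∀ t : K, RightIsolated t →
      Tendsto (fun n => ν n (Set.Iic t)) atTop (𝓝 0)) :
    ∀ f : C(K, ℝ), Tendsto (fun n => sint (ν n) f) atTop (𝓝 0) := by
  classical
  obtain ⟨C₀, hC₀⟩ := hbdd
  set C : ℝ := max C₀ 0 with hCdef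
  have hC : ∀ n, ((ν n).totalVariation Set.univ).toReal ≤ C :=
    fun n => le_trans (hC₀ n) (le_max_left _ _)
  have hCnonneg : 0 ≤ C := le_max_right _ _
  -- the generating set
  set G : Set C(K, ℝ) :=
    {g | ∃ t : K, ∃ ht : RightIsolated t, g = cInd (Iic t) (isClopen_Iic_of_rightIsolated ht)}
    with hGdef
  -- maximum of K
  obtain ⟨M, -, hMub⟩ := (isCompact_univ : IsCompact (Set.univ : Set K)).exists_isGreatest univ_nonempty
  have hMmax : RightIsolated M := Or.inl (fun b _ => hMub (mem_univ b))
  -- 1 ∈ G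
  have hone : (1 : C(K, ℝ)) ∈ G := by
    refine ⟨M, hMmax, ?_⟩
    ext x
    have hx : x ∈ Iic M := hMub (mem_univ x)
    simp [cInd_apply, Set.indicator_of_mem hx]
  -- G is closed under multiplication
  have hGmul : ∀ g₁ ∈ G, ∀ g₂ ∈ G, g₁ * g₂ ∈ G := by
    rintro _ ⟨s, hs, rfl⟩ _ ⟨t, ht, rfl⟩
    have hmin : RightIsolated (min s t) := by
      rcases le_total s t with h | h
      · rwa [min_eq_left h]
      · rwa [min_eq_right h]
    refine ⟨min s t, hmin, ?_⟩
    ext x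
    simp only [ContinuousMap.mul_apply, cInd_apply]
    by_cases hxs : x ≤ s <;> by_cases hxt : x ≤ t <;>
      simp [Set.indicator_apply, mem_Iic, hxs, hxt, le_min_iff]
  -- the span of G is a subalgebra
  set A : Submodule ℝ C(K, ℝ) := Submodule.span ℝ G with hAdef
  have honeA : (1 : C(K, ℝ)) ∈ A := Submodule.subset_span hone
  have hmulA : ∀ f g : C(K, ℝ), f ∈ A → g ∈ A → f * g ∈ A := by
    intro f g hf hg
    have : A * A ≤ A := by
      rw [hAdef, Submodule.span_mul_span]
      apply Submodule.span_le.2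
      rintro _ ⟨a, ha, b, hb, rfl⟩
      exact Submodule.subset_span (hGmul a ha b hb)
    exact this (Submodule.mul_mem_mul hf hg)
  set B : Subalgebra ℝ C(K, ℝ) := A.toSubalgebra honeA hmulA with hBdef
  -- B separates points
  have hsep : B.SeparatesPoints := by
    intro x y hxy
    have key : ∀ a b : K, a < b → ∃ f ∈ (B : Set C(K, ℝ)), f b ≠ f a := by
      intro a b hab
      obtain ⟨t, ht, hat, htb⟩ := exists_rightIsolated_between hKzd hab
      refine ⟨cInd (Iic t) (isClopen_Iic_of_rightIsolated ht),
        Submodule.subset_span ⟨t, ht, rfl⟩, ?_⟩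
      have ha : a ∈ Iic t := hat
      have hb : b ∉ Iic t := not_le.2 htb
      simp [cInd_apply, Set.indicator_of_mem ha, Set.indicator_of_notMem hb]
    rcases lt_or_gt_of_ne hxy with h | h
    · obtain ⟨f, hf, hne⟩ := key x y h
      exact ⟨_, ⟨f, hf, rfl⟩, fun e => hne e.symm⟩
    · obtain ⟨f, hf, hne⟩ := key y x h
      exact ⟨_, ⟨f, hf, rfl⟩, hne⟩
  -- Stone-Weierstrass: B is dense
  have hdense : B.topologicalClosure = ⊤ :=
    ContinuousMap.subalgebra_topologicalClosure_eq_top_of_separatesPoints B hsep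
  -- elements of A satisfy the conclusion
  have hA : ∀ g ∈ A, Tendsto (fun n => sint (ν n) g) atTop (𝓝 0) := by
    intro g hg
    induction hg using Submodule.span_induction with
    | mem g hgG =>
      obtain ⟨t, ht, rfl⟩ := hgG
      have := hnull t ht
      convert this using 2 with n
      exact sint_cInd (ν n) (Iic t) (isClopen_Iic_of_rightIsolated ht)
    | zero =>
      simp only [sint_zero]
      exact tendsto_const_nhds
    | add f g _ _ hf hg =>
      have := hf.add hg
      rw [add_zero] at this
      convert this using 2 with n
      exact sint_add (ν n) f g
    | smul c f _ hf =>
      have := hf.const_mul c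
      rw [mul_zero] at this
      convert this using 2 with n
      exact sint_smul (ν n) c f
  -- conclude by approximation
  intro f
  rw [Metric.tendsto_atTop]
  intro ε hε
  -- find g ∈ A with ‖f - g‖ < ε / (2 * (C + 1))
  have hfc : f ∈ closure (B : Set C(K, ℝ)) := by
    have : f ∈ B.topologicalClosure := hdense ▸ Algebra.mem_top
    exact this
  have hδ : (0 : ℝ) < ε / (2 * (C + 1)) := by positivity
  obtain ⟨g, hgB, hdist⟩ := Metric.mem_closure_iff.1 hfc _ hδ
  have hgA : g ∈ A := hgB
  obtain ⟨N, hN⟩ := (Metric.tendsto_atTop.1 (hA g hgA)) (ε / 2) (by positivity)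
  refine ⟨N, fun n hn => ?_⟩
  have h1 : |sint (ν n) g| < ε / 2 := by
    have := hN n hn
    rwa [Real.dist_eq, sub_zero] at this
  have h2 : |sint (ν n) (f - g)| ≤ ‖f - g‖ * C := by
    calc |sint (ν n) (f - g)| ≤ ‖f - g‖ * ((ν n).totalVariation Set.univ).toReal :=
          abs_sint_le (ν n) (f - g)
      _ ≤ ‖f - g‖ * C := by
          apply mul_le_mul_of_nonneg_left (hC n) (norm_nonneg _)
  have hfg : ‖f - g‖ < ε / (2 * (C + 1)) := by
    rwa [← dist_eq_norm]
  have h3 : ‖f - g‖ * C < ε / 2 := by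
    have hC1 : C < C + 1 := lt_add_one C
    calc ‖f - g‖ * C ≤ ‖f - g‖ * (C + 1) :=
          mul_le_mul_of_nonneg_left (le_of_lt hC1) (norm_nonneg _)
      _ < (ε / (2 * (C + 1))) * (C + 1) := by
          apply mul_lt_mul_of_pos_right hfg (by positivity)
      _ = ε / 2 := by field_simp
  rw [Real.dist_eq, sub_zero]
  have hsplit : sint (ν n) f = sint (ν n) g + sint (ν n) (f - g) := by
    rw [sint_sub]; ring
  calc |sint (ν n) f| ≤ |sint (ν n) g| + |sint (ν n) (f - g)| := by
        rw [hsplit]; exact abs_add_le _ _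
    _ < ε / 2 + ε / 2 := by linarith
    _ = ε := by ring
end
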